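/- If μ ~ N(m, C) is a D-dimensional Gaussian vector, A ∈ R^{P×D}, and Σ is symmetric positive definite, then Var[N(y | Aμ, Σ)] = 2^{-P/2} det(2πΣ)^{-1/2} N(y | Am, Σ/2 + A C A^T) − 2^{-P/2} det(2π(Σ + A C A^T))^{-1/2} N(y | Am, (Σ + A C A^T)/2). -/

import Mathlib

open Matrix Real MeasureTheory

/-- Multivariate Gaussian density `N(y | m, C)`. -/
noncomputable def gaussPdf {n : Type*} [Fintype n] [DecidableEq n]
    (y m : n → ℝ) (C : Matrix n n ℝ) : ℝ :=
  (Real.sqrt (((2 * Real.pi) • C).det))⁻¹ *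
    Real.exp (-(1 / 2) * ((y - m) ⬝ᵥ C⁻¹.mulVec (y - m)))

section Aux

variable {n : ℕ}


lemma posDef_smul {M : Matrix (Fin n) (Fin n) ℝ} (hM : M.PosDef) {c : ℝ} (hc : 0 < c) :
    (c • M).PosDef := by
  exact hM.smul hc

lemma sqrt_det_twopi {M : Matrix (Fin n) (Fin n) ℝ} (hM : M.PosDef) :
    Real.sqrt (((2 * Real.pi) • M).det)
      = (2 * Real.pi) ^ ((n : ℝ) / 2) * Real.sqrt M.det := by
  have h2pi : (0:ℝ) < 2 * Real.pi := by positivity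
  rw [Matrix.det_smul, Fintype.card_fin, Real.sqrt_mul (by positivity)]
  congr 1
  rw [Real.sqrt_eq_rpow, ← Real.rpow_natCast (2 * Real.pi) n, ← Real.rpow_mul h2pi.le]
  ring_nf


lemma sqrt_det_smul {M : Matrix (Fin n) (Fin n) ℝ} {c : ℝ} (hc : 0 < c) :
    Real.sqrt ((c • M).det) = c ^ ((n : ℝ) / 2) * Real.sqrt M.det := by
  rw [Matrix.det_smul, Fintype.card_fin, Real.sqrt_mul (by positivity)]
  congr 1
  rw [Real.sqrt_eq_rpow, ← Real.rpow_natCast c n, ← Real.rpow_mul hc.le]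
  ring_nf

lemma inv_half_smul {S : Matrix (Fin n) (Fin n) ℝ} (hS : S.PosDef) :
    ((1 / 2 : ℝ) • S)⁻¹ = (2 : ℝ) • S⁻¹ := by
  apply Matrix.inv_eq_right_inv
  rw [smul_mul_smul_comm]
  norm_num [Matrix.mul_nonsing_inv S hS.det_pos.ne'.isUnit]

lemma gaussPdf_sq {P : ℕ} (y mu : Fin P → ℝ) {S : Matrix (Fin P) (Fin P) ℝ} (hS : S.PosDef) :
    gaussPdf y mu S ^ 2
      = (2 : ℝ) ^ (-(P : ℝ) / 2) * (Real.sqrt (((2 * Real.pi) • S).det))⁻¹ *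
          gaussPdf y mu ((1 / 2 : ℝ) • S) := by
  have hs0 : 0 < Real.sqrt S.det := Real.sqrt_pos.2 hS.det_pos
  have hpi : (0:ℝ) < Real.pi := Real.pi_pos
  unfold gaussPdf
  rw [inv_half_smul hS]
  have hexp : Real.exp (-(1 / 2) * ((y - mu) ⬝ᵥ ((2:ℝ) • S⁻¹).mulVec (y - mu)))
      = Real.exp (-(1 / 2) * ((y - mu) ⬝ᵥ S⁻¹.mulVec (y - mu))) ^ 2 := by
    rw [← Real.exp_nat_mul]
    congr 1
    simp only [smul_mulVec, dotProduct_smul, smul_eq_mul, Nat.cast_ofNat]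
    ring
  rw [hexp]
  have hsm : (2 * Real.pi) • ((1 / 2 : ℝ) • S) = Real.pi • S := by
    rw [smul_smul, show (2 * Real.pi) * (1 / 2 : ℝ) = Real.pi by ring]
  rw [hsm, sqrt_det_smul hpi, sqrt_det_smul (show (0:ℝ) < 2 * Real.pi by positivity)]
  rw [mul_pow]
  have h2pi : (2 * Real.pi) ^ ((P : ℝ) / 2) = 2 ^ ((P : ℝ) / 2) * Real.pi ^ ((P : ℝ) / 2) :=
    Real.mul_rpow (by norm_num) hpi.le
  have hinv : (2:ℝ) ^ (-(P : ℝ) / 2) = (2 ^ ((P : ℝ) / 2))⁻¹ := by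
    rw [← Real.rpow_neg (by norm_num)]; ring_nf
  rw [h2pi, hinv]
  have h2 : (0:ℝ) < 2 ^ ((P : ℝ) / 2) := Real.rpow_pos_of_pos (by norm_num) _
  have h3 : (0:ℝ) < Real.pi ^ ((P : ℝ) / 2) := Real.rpow_pos_of_pos hpi _
  field_simp


lemma integral_std_gauss :
    (∫ x : Fin n → ℝ, Real.exp (-(1 / 2) * (x ⬝ᵥ x))) = (2 * Real.pi) ^ ((n : ℝ) / 2) := by
  have hmp := (EuclideanSpace.volume_preserving_symm_measurableEquiv_toLp (Fin n)).symm
  have hint : (∫ x : Fin n → ℝ, Real.exp (-(1 / 2) * (x ⬝ᵥ x)))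
      = ∫ v : EuclideanSpace ℝ (Fin n), Real.exp (-(1/2 : ℝ) * ‖v‖ ^ 2) := by
    rw [← hmp.integral_comp (MeasurableEquiv.measurableEmbedding _)]
    congr 1
    funext x
    congr 1
    rw [EuclideanSpace.norm_eq]
    rw [Real.sq_sqrt (by positivity)]
    simp only [dotProduct, Real.norm_eq_abs, sq_abs, MeasurableEquiv.symm_symm,
      MeasurableEquiv.symm_mk, MeasurableEquiv.coe_mk, MeasurableEquiv.coe_toLp, WithLp.ofLp_toLp, pow_two, abs_mul_abs_self]
  rw [hint]
  have := GaussianFourier.integral_rexp_neg_mul_sq_norm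
    (V := EuclideanSpace ℝ (Fin n)) (b := (1/2 : ℝ)) (by norm_num)
  simp only [neg_mul] at this ⊢
  rw [this, finrank_euclideanSpace_fin]
  norm_num
  rw [show Real.pi / (1/2 : ℝ) = 2 * Real.pi by ring]


lemma integral_comp_mulVec {Q : Matrix (Fin n) (Fin n) ℝ} (hQ : Q.det ≠ 0)
    {g : (Fin n → ℝ) → ℝ} (hg : Continuous g) :
    (∫ x : Fin n → ℝ, g (Q.mulVec x)) = |Q.det|⁻¹ * ∫ y : Fin n → ℝ, g y := by
  have hdet : LinearMap.det (Matrix.toLin' Q) ≠ 0 := by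
    rwa [LinearMap.det_toLin']
  have hmap : Measure.map (Matrix.toLin' Q) volume
      = ENNReal.ofReal |(LinearMap.det (Matrix.toLin' Q))⁻¹| • volume :=
    Measure.map_linearMap_addHaar_eq_smul_addHaar volume hdet
  have hcont : Continuous (Matrix.toLin' Q) := LinearMap.continuous_of_finiteDimensional _
  have h1 : (∫ x : Fin n → ℝ, g (Q.mulVec x)) = ∫ y, g y ∂(Measure.map (Matrix.toLin' Q) volume) := by
    rw [integral_map hcont.aemeasurable]
    · simp [Matrix.toLin'_apply]
    · exact hg.aestronglyMeasurable
  rw [h1, hmap, integral_smul_measure]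
  rw [LinearMap.det_toLin', abs_inv]
  rw [ENNReal.toReal_ofReal (by positivity)]
  rfl

open scoped MatrixOrder in
lemma integral_gauss {Λ : Matrix (Fin n) (Fin n) ℝ} (hΛ : Λ.PosDef) (v : Fin n → ℝ) :
    (∫ x : Fin n → ℝ, Real.exp (-(1 / 2) * ((x - v) ⬝ᵥ Λ.mulVec (x - v))))
      = (2 * Real.pi) ^ ((n : ℝ) / 2) / Real.sqrt Λ.det := by
  have htrans : (∫ x : Fin n → ℝ, Real.exp (-(1 / 2) * ((x - v) ⬝ᵥ Λ.mulVec (x - v))))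
      = ∫ x : Fin n → ℝ, Real.exp (-(1 / 2) * (x ⬝ᵥ Λ.mulVec x)) :=
    integral_sub_right_eq_self (fun x => Real.exp (-(1 / 2) * (x ⬝ᵥ Λ.mulVec x))) v
  rw [htrans]
  set Q := CFC.sqrt Λ with hQdef
  have hQQ : Q * Q = Λ := by
    have := CFC.sq_sqrt Λ hΛ.posSemidef.nonneg
    rwa [pow_two] at this
  have hQsymm : Qᵀ = Q := by
    have h := (CFC.sqrt_nonneg Λ).posSemidef.1
    rw [← Matrix.conjTranspose_eq_transpose_of_trivial]
    exact h
  have hdetsq : Q.det ^ 2 = Λ.det := by rw [← hQQ, Matrix.det_mul, pow_two]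
  have habs : |Q.det| = Real.sqrt Λ.det := by
    rw [← hdetsq, Real.sqrt_sq_eq_abs]
  have hdet0 : Q.det ≠ 0 := by
    intro h
    have := hΛ.det_pos
    rw [← hdetsq, h] at this
    norm_num at this
  have hquad : ∀ x : Fin n → ℝ, x ⬝ᵥ Λ.mulVec x = (Q.mulVec x) ⬝ᵥ (Q.mulVec x) := by
    intro x
    rw [← hQQ, ← Matrix.mulVec_mulVec, Matrix.dotProduct_mulVec]
    congr 1
    rw [← Matrix.mulVec_transpose, hQsymm]
  have hcont : Continuous fun u : Fin n → ℝ => Real.exp (-(1 / 2) * (u ⬝ᵥ u)) := by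
    apply Real.continuous_exp.comp
    apply Continuous.mul continuous_const
    exact continuous_finset_sum _ fun i _ => (continuous_apply i).mul (continuous_apply i)
  calc (∫ x : Fin n → ℝ, Real.exp (-(1 / 2) * (x ⬝ᵥ Λ.mulVec x)))
      = ∫ x : Fin n → ℝ, Real.exp (-(1 / 2) * ((Q.mulVec x) ⬝ᵥ (Q.mulVec x))) := by
        congr 1; funext x; rw [hquad]
    _ = |Q.det|⁻¹ * ∫ u : Fin n → ℝ, Real.exp (-(1 / 2) * (u ⬝ᵥ u)) :=
        integral_comp_mulVec hdet0 hcont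
    _ = (2 * Real.pi) ^ ((n : ℝ) / 2) / Real.sqrt Λ.det := by
        rw [integral_std_gauss, habs]
        ring

end Aux

lemma conjT_eq_T {k l : ℕ} (M : Matrix (Fin k) (Fin l) ℝ) : Mᴴ = Mᵀ :=
  Matrix.conjTranspose_eq_transpose_of_trivial M

lemma dot_symm {k : ℕ} {M : Matrix (Fin k) (Fin k) ℝ} (hM : Mᵀ = M) (u w : Fin k → ℝ) :
    u ⬝ᵥ M.mulVec w = w ⬝ᵥ M.mulVec u := by
  rw [Matrix.dotProduct_mulVec, ← hM, Matrix.vecMul_transpose, hM, dotProduct_comm]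

lemma dot_transpose {k l : ℕ} (M : Matrix (Fin k) (Fin l) ℝ) (u : Fin l → ℝ) (w : Fin k → ℝ) :
    u ⬝ᵥ Mᵀ.mulVec w = (M.mulVec u) ⬝ᵥ w := by
  rw [Matrix.dotProduct_mulVec, Matrix.vecMul_transpose]

lemma integral_gaussPdf_prod {D P : ℕ}
    (m : Fin D → ℝ) {C : Matrix (Fin D) (Fin D) ℝ} (hC : C.PosDef)
    (A : Matrix (Fin P) (Fin D) ℝ)
    {S : Matrix (Fin P) (Fin P) ℝ} (hS : S.PosDef) (y : Fin P → ℝ) :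
    (∫ x : Fin D → ℝ, gaussPdf x m C * gaussPdf y (A.mulVec x) S)
      = gaussPdf y (A.mulVec m) (S + A * C * Aᵀ) := by
  obtain ⟨d, hd⟩ : ∃ d : Fin P → ℝ, d = y - A.mulVec m := ⟨_, rfl⟩
  obtain ⟨Λ, hΛdef⟩ : ∃ Λ : Matrix (Fin D) (Fin D) ℝ, Λ = C⁻¹ + Aᵀ * S⁻¹ * A := ⟨_, rfl⟩
  obtain ⟨T, hTdef⟩ : ∃ T : Matrix (Fin P) (Fin P) ℝ, T = S + A * C * Aᵀ := ⟨_, rfl⟩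
  obtain ⟨μ, hμdef⟩ : ∃ μ : Fin D → ℝ, μ = Λ⁻¹.mulVec (Aᵀ.mulVec (S⁻¹.mulVec d)) := ⟨_, rfl⟩
  rw [← hTdef]
  -- positivity facts
  have hCi : C⁻¹.PosDef := hC.inv
  have hSi : S⁻¹.PosDef := hS.inv
  have hAtSA : (Aᵀ * S⁻¹ * A).PosSemidef := by
    have := hSi.posSemidef.conjTranspose_mul_mul_same A
    rwa [conjT_eq_T] at this
  have hΛ : Λ.PosDef := by rw [hΛdef]; exact hCi.add_posSemidef hAtSA
  have hACA : (A * C * Aᵀ).PosSemidef := by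
    have := hC.posSemidef.mul_mul_conjTranspose_same A
    rwa [conjT_eq_T] at this
  have hT : T.PosDef := by rw [hTdef]; exact hS.add_posSemidef hACA
  -- symmetry facts
  have hSsym : S⁻¹ᵀ = S⁻¹ := by rw [← conjT_eq_T]; exact hSi.1
  have hΛsym : Λᵀ = Λ := by rw [← conjT_eq_T]; exact hΛ.1
  -- Woodbury
  have hWood : T⁻¹ = S⁻¹ - S⁻¹ * A * Λ⁻¹ * Aᵀ * S⁻¹ := by
    have h := Matrix.add_mul_mul_inv_eq_sub (A := S) (U := A) (C := C) (V := Aᵀ)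
      hS.isUnit hC.isUnit (by rw [← hΛdef]; exact hΛ.isUnit)
    rw [hTdef, h, hΛdef]
  -- determinant identity
  have hdet : C.det * S.det * Λ.det = T.det := by
    have h1 : Λ = C⁻¹ * (1 + (C * Aᵀ * S⁻¹) * A) := by
      rw [Matrix.mul_add, Matrix.mul_one, hΛdef]
      congr 1
      rw [← Matrix.mul_assoc, ← Matrix.mul_assoc, ← Matrix.mul_assoc,
        Matrix.nonsing_inv_mul C hC.det_pos.ne'.isUnit, Matrix.one_mul]
    have h2 : (1 + A * (C * Aᵀ * S⁻¹) : Matrix (Fin P) (Fin P) ℝ) = T * S⁻¹ := by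
      rw [hTdef, Matrix.add_mul, Matrix.mul_nonsing_inv S hS.det_pos.ne'.isUnit,
        ← Matrix.mul_assoc, ← Matrix.mul_assoc, add_comm]
    have h3 : Λ.det = C⁻¹.det * (T.det * S⁻¹.det) := by
      rw [h1, Matrix.det_mul, Matrix.det_one_add_mul_comm, h2, Matrix.det_mul]
    rw [h3, Matrix.det_nonsing_inv, Matrix.det_nonsing_inv, Ring.inverse_eq_inv']
    field_simp
    rw [mul_comm (C.det * S.det) T.det, mul_div_assoc,
      div_self (mul_pos hC.det_pos hS.det_pos).ne', mul_one]
  -- the exponent identity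
  have hquad : ∀ x : Fin D → ℝ,
      x ⬝ᵥ C⁻¹.mulVec x + (d - A.mulVec x) ⬝ᵥ S⁻¹.mulVec (d - A.mulVec x)
        = (x - μ) ⬝ᵥ Λ.mulVec (x - μ) + d ⬝ᵥ T⁻¹.mulVec d := by
    intro x
    have hΛμ : Λ.mulVec μ = Aᵀ.mulVec (S⁻¹.mulVec d) := by
      rw [hμdef, Matrix.mulVec_mulVec, Matrix.mul_nonsing_inv _ hΛ.det_pos.ne'.isUnit,
        Matrix.one_mulVec]
    have e1 : x ⬝ᵥ Λ.mulVec x = x ⬝ᵥ C⁻¹.mulVec x + (A.mulVec x) ⬝ᵥ S⁻¹.mulVec (A.mulVec x) := by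
      rw [hΛdef, Matrix.add_mulVec, dotProduct_add]
      congr 1
      rw [Matrix.mul_assoc, ← Matrix.mulVec_mulVec, dot_transpose, Matrix.mulVec_mulVec]
    have e2 : x ⬝ᵥ Λ.mulVec μ = (A.mulVec x) ⬝ᵥ S⁻¹.mulVec d := by
      rw [hΛμ, dot_transpose]
    have e3 : μ ⬝ᵥ Λ.mulVec x = (A.mulVec x) ⬝ᵥ S⁻¹.mulVec d := by
      rw [dot_symm hΛsym]; exact e2
    have e4 : μ ⬝ᵥ Λ.mulVec μ = (A.mulVec μ) ⬝ᵥ S⁻¹.mulVec d := by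
      rw [hΛμ, dot_transpose]
    have e5 : d ⬝ᵥ T⁻¹.mulVec d = d ⬝ᵥ S⁻¹.mulVec d - (A.mulVec μ) ⬝ᵥ S⁻¹.mulVec d := by
      rw [hWood, Matrix.sub_mulVec, dotProduct_sub]
      congr 1
      have h9 : (S⁻¹ * A * Λ⁻¹ * Aᵀ * S⁻¹).mulVec d = S⁻¹.mulVec (A.mulVec μ) := by
        rw [hμdef]
        simp only [← Matrix.mulVec_mulVec]
      rw [h9, dot_symm hSsym]
    have e6 : d ⬝ᵥ S⁻¹.mulVec (A.mulVec x) = (A.mulVec x) ⬝ᵥ S⁻¹.mulVec d := dot_symm hSsym _ _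
    rw [Matrix.mulVec_sub, dotProduct_sub, sub_dotProduct, sub_dotProduct,
      Matrix.mulVec_sub, dotProduct_sub, sub_dotProduct, sub_dotProduct]
    rw [e1, e2, e3, e4, e5, e6]
    ring
  -- translate the integral
  have htrans := MeasureTheory.integral_add_right_eq_self (μ := volume)
    (fun x : Fin D → ℝ => gaussPdf x m C * gaussPdf y (A.mulVec x) S) m
  rw [← htrans]
  -- pointwise rewrite
  have hpt : ∀ x : Fin D → ℝ,
      gaussPdf (x + m) m C * gaussPdf y (A.mulVec (x + m)) S
        = ((Real.sqrt (((2 * Real.pi) • C).det))⁻¹ * (Real.sqrt (((2 * Real.pi) • S).det))⁻¹ *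
            Real.exp (-(1 / 2) * (d ⬝ᵥ T⁻¹.mulVec d))) *
          Real.exp (-(1 / 2) * ((x - μ) ⬝ᵥ Λ.mulVec (x - μ))) := by
    intro x
    unfold gaussPdf
    have h1 : x + m - m = x := by abel
    have h2 : y - A.mulVec (x + m) = d - A.mulVec x := by
      rw [Matrix.mulVec_add, hd]; abel
    rw [h1, h2]
    rw [show ((Real.sqrt (((2 * Real.pi) • C).det))⁻¹ *
          Real.exp (-(1 / 2) * (x ⬝ᵥ C⁻¹.mulVec x))) *
          ((Real.sqrt (((2 * Real.pi) • S).det))⁻¹ *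
          Real.exp (-(1 / 2) * ((d - A.mulVec x) ⬝ᵥ S⁻¹.mulVec (d - A.mulVec x))))
        = (Real.sqrt (((2 * Real.pi) • C).det))⁻¹ * (Real.sqrt (((2 * Real.pi) • S).det))⁻¹ *
          (Real.exp (-(1 / 2) * (x ⬝ᵥ C⁻¹.mulVec x)) *
           Real.exp (-(1 / 2) * ((d - A.mulVec x) ⬝ᵥ S⁻¹.mulVec (d - A.mulVec x)))) by ring]
    rw [← Real.exp_add,
      show -(1 / 2 : ℝ) * (x ⬝ᵥ C⁻¹.mulVec x)
          + -(1 / 2) * ((d - A.mulVec x) ⬝ᵥ S⁻¹.mulVec (d - A.mulVec x))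
        = -(1 / 2) * (x ⬝ᵥ C⁻¹.mulVec x + (d - A.mulVec x) ⬝ᵥ S⁻¹.mulVec (d - A.mulVec x)) by ring,
      hquad x,
      show -(1 / 2 : ℝ) * ((x - μ) ⬝ᵥ Λ.mulVec (x - μ) + d ⬝ᵥ T⁻¹.mulVec d)
        = -(1 / 2) * (d ⬝ᵥ T⁻¹.mulVec d) + -(1 / 2) * ((x - μ) ⬝ᵥ Λ.mulVec (x - μ)) by ring,
      Real.exp_add]
    ring
  rw [show (∫ x : Fin D → ℝ, gaussPdf (x + m) m C * gaussPdf y (A.mulVec (x + m)) S)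
      = ∫ x : Fin D → ℝ, ((Real.sqrt (((2 * Real.pi) • C).det))⁻¹ *
          (Real.sqrt (((2 * Real.pi) • S).det))⁻¹ *
          Real.exp (-(1 / 2) * (d ⬝ᵥ T⁻¹.mulVec d))) *
          Real.exp (-(1 / 2) * ((x - μ) ⬝ᵥ Λ.mulVec (x - μ))) by
    congr 1; funext x; exact hpt x]
  rw [integral_const_mul, integral_gauss hΛ μ]
  -- final determinant bookkeeping
  unfold gaussPdf
  rw [← hd]
  rw [sqrt_det_smul (show (0:ℝ) < 2 * Real.pi by positivity),
    sqrt_det_smul (show (0:ℝ) < 2 * Real.pi by positivity),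
    sqrt_det_smul (show (0:ℝ) < 2 * Real.pi by positivity)]
  have hsC : (0:ℝ) < Real.sqrt C.det := Real.sqrt_pos.2 hC.det_pos
  have hsS : (0:ℝ) < Real.sqrt S.det := Real.sqrt_pos.2 hS.det_pos
  have hsΛ : (0:ℝ) < Real.sqrt Λ.det := Real.sqrt_pos.2 hΛ.det_pos
  have hsT : (0:ℝ) < Real.sqrt T.det := Real.sqrt_pos.2 hT.det_pos
  have hDp : (0:ℝ) < (2 * Real.pi) ^ ((D : ℝ) / 2) := Real.rpow_pos_of_pos (by positivity) _
  have hPp : (0:ℝ) < (2 * Real.pi) ^ ((P : ℝ) / 2) := Real.rpow_pos_of_pos (by positivity) _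
  have hprod : Real.sqrt C.det * Real.sqrt S.det * Real.sqrt Λ.det = Real.sqrt T.det := by
    rw [← Real.sqrt_mul hC.det_pos.le, ← Real.sqrt_mul (mul_pos hC.det_pos hS.det_pos).le, hdet]
  rw [← hprod]
  field_simp

/-- If `μ ~ N(m, C)`, `A` a fixed matrix, `Σ` SPD and `Σ + ACAᵀ` positive definite, then
`Var[N(y | Aμ, Σ)] = 2^{-P/2} det(2πΣ)^{-1/2} N(y | Am, Σ/2 + ACAᵀ)
  − 2^{-P/2} det(2π(Σ + ACAᵀ))^{-1/2} N(y | Am, (Σ + ACAᵀ)/2)`. -/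
theorem variance_gaussPdf_affine {D P : ℕ}
    (m : Fin D → ℝ) (C : Matrix (Fin D) (Fin D) ℝ) (hC : C.PosDef)
    (A : Matrix (Fin P) (Fin D) ℝ)
    (S : Matrix (Fin P) (Fin P) ℝ) (hS : S.PosDef)
    (hSum : (S + A * C * Aᵀ).PosDef) (y : Fin P → ℝ) :
    (∫ x : Fin D → ℝ, gaussPdf x m C * gaussPdf y (A.mulVec x) S ^ 2) -
      (∫ x : Fin D → ℝ, gaussPdf x m C * gaussPdf y (A.mulVec x) S) ^ 2 =
      (2 : ℝ) ^ (-(P : ℝ) / 2) * (Real.sqrt (((2 * Real.pi) • S).det))⁻¹ *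
          gaussPdf y (A.mulVec m) ((1 / 2 : ℝ) • S + A * C * Aᵀ) -
        (2 : ℝ) ^ (-(P : ℝ) / 2) *
            (Real.sqrt (((2 * Real.pi) • (S + A * C * Aᵀ)).det))⁻¹ *
          gaussPdf y (A.mulVec m) ((1 / 2 : ℝ) • (S + A * C * Aᵀ)) := by
  have h1 : (∫ x : Fin D → ℝ, gaussPdf x m C * gaussPdf y (A.mulVec x) S ^ 2)
      = (2 : ℝ) ^ (-(P : ℝ) / 2) * (Real.sqrt (((2 * Real.pi) • S).det))⁻¹ *
        gaussPdf y (A.mulVec m) ((1 / 2 : ℝ) • S + A * C * Aᵀ) := by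
    have hhalf : ((1 / 2 : ℝ) • S).PosDef := posDef_smul hS (by norm_num)
    calc (∫ x : Fin D → ℝ, gaussPdf x m C * gaussPdf y (A.mulVec x) S ^ 2)
        = ∫ x : Fin D → ℝ, (2 : ℝ) ^ (-(P : ℝ) / 2) * (Real.sqrt (((2 * Real.pi) • S).det))⁻¹ *
            (gaussPdf x m C * gaussPdf y (A.mulVec x) ((1 / 2 : ℝ) • S)) := by
          congr 1; funext x; rw [gaussPdf_sq y _ hS]; ring
      _ = (2 : ℝ) ^ (-(P : ℝ) / 2) * (Real.sqrt (((2 * Real.pi) • S).det))⁻¹ *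
            ∫ x : Fin D → ℝ, gaussPdf x m C * gaussPdf y (A.mulVec x) ((1 / 2 : ℝ) • S) :=
          integral_const_mul _ _
      _ = _ := by rw [integral_gaussPdf_prod m hC A hhalf y]
  have h2 : (∫ x : Fin D → ℝ, gaussPdf x m C * gaussPdf y (A.mulVec x) S)
      = gaussPdf y (A.mulVec m) (S + A * C * Aᵀ) := integral_gaussPdf_prod m hC A hS y
  rw [h1, h2, gaussPdf_sq y _ hSum]
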